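/- Properties of the L-distance: Let X be a metric space with a partial order, and define d_L(x,y) := sup { f(x) − f(y) : f : X → ℝ monotone and 1-Lipschitz }. Then: (1) if x ≤ y then d_L(x,y) = 0; (2) d_L satisfies the triangle inequality d_L(x,z) ≤ d_L(x,y) + d_L(y,z); (3) 0 ≤ d_L(x,y) ≤ d(x,y) for all x,y; (4) d_L is jointly lower semicontinuous as a function X × X → ℝ; (5) X is L-ordered if and only if d_L(x,y) = 0 implies x ≤ y for all x,y ∈ X. -/
import Mathlib


/-- The L-distance on an ordered metric space: the supremum of `f x − f y` over all
monotone 1-Lipschitz functions `f : X → ℝ`. -/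
noncomputable def dL {X : Type*} [MetricSpace X] [PartialOrder X] (x y : X) : ℝ :=
  sSup {t : ℝ | ∃ f : X → ℝ, Monotone f ∧ LipschitzWith 1 f ∧ t = f x - f y}

section aux
variable {X : Type*} [MetricSpace X] [PartialOrder X]

lemma dL_set_mem_zero (x y : X) :
    (0 : ℝ) ∈ {t : ℝ | ∃ f : X → ℝ, Monotone f ∧ LipschitzWith 1 f ∧ t = f x - f y} :=
  ⟨fun _ => 0, monotone_const, (LipschitzWith.const (0:ℝ)).weaken zero_le_one, by ring⟩

lemma dL_set_bdd (x y : X) :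
    ∀ t ∈ {t : ℝ | ∃ f : X → ℝ, Monotone f ∧ LipschitzWith 1 f ∧ t = f x - f y},
      t ≤ dist x y := by
  rintro t ⟨f, -, hf, rfl⟩
  have := hf.dist_le_mul x y
  rw [Real.dist_eq] at this
  simp only [NNReal.coe_one, one_mul] at this
  exact (le_abs_self _).trans this

lemma dL_bddAbove (x y : X) :
    BddAbove {t : ℝ | ∃ f : X → ℝ, Monotone f ∧ LipschitzWith 1 f ∧ t = f x - f y} :=
  ⟨dist x y, dL_set_bdd x y⟩

lemma le_dL (x y : X) {f : X → ℝ} (hm : Monotone f) (hl : LipschitzWith 1 f) :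
    f x - f y ≤ dL x y :=
  le_csSup (dL_bddAbove x y) ⟨f, hm, hl, rfl⟩

lemma dL_le {x y : X} {c : ℝ}
    (h : ∀ f : X → ℝ, Monotone f → LipschitzWith 1 f → f x - f y ≤ c) :
    dL x y ≤ c := by
  have hc : (0:ℝ) ≤ c := by
    simpa using h (fun _ => 0) monotone_const ((LipschitzWith.const (0:ℝ)).weaken zero_le_one)
  refine Real.sSup_le ?_ hc
  rintro t ⟨f, hm, hl, rfl⟩
  exact h f hm hl

lemma dL_nonneg (x y : X) : 0 ≤ dL x y :=
  le_csSup (dL_bddAbove x y) (dL_set_mem_zero x y)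

lemma dL_le_dist (x y : X) : dL x y ≤ dist x y :=
  Real.sSup_le (dL_set_bdd x y) dist_nonneg

end aux

/-- Properties of the L-distance: it vanishes on ordered pairs, satisfies the triangle
inequality, is nonnegative and bounded above by the metric, is jointly lower semicontinuous,
and its vanishing detects the order exactly when `X` is L-ordered. -/
theorem dL_properties {X : Type*} [MetricSpace X] [PartialOrder X] :
    (∀ x y : X, x ≤ y → dL x y = 0) ∧
    (∀ x y z : X, dL x z ≤ dL x y + dL y z) ∧
    (∀ x y : X, 0 ≤ dL x y ∧ dL x y ≤ dist x y) ∧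
    LowerSemicontinuous (fun z : X × X => dL z.1 z.2) ∧
    ((∀ x y : X, x ≤ y ↔ ∀ f : X → ℝ, Monotone f → LipschitzWith 1 f → f x ≤ f y) ↔
      (∀ x y : X, dL x y = 0 → x ≤ y)) := by
  refine ⟨?_, ?_, ?_, ?_, ?_⟩
  · intro x y hxy
    refine le_antisymm ?_ (dL_nonneg x y)
    exact dL_le fun f hm _ => by linarith [hm hxy]
  · intro x y z
    apply dL_le
    intro f hm hl
    have h1 := le_dL x y hm hl
    have h2 := le_dL y z hm hl
    linarith
  · exact fun x y => ⟨dL_nonneg x y, dL_le_dist x y⟩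
  · intro ⟨x, y⟩ t ht
    simp only at ht
    obtain ⟨s, ⟨f, hm, hl, rfl⟩, hts⟩ :=
      exists_lt_of_lt_csSup ⟨0, dL_set_mem_zero x y⟩ ht
    have hc : Continuous fun z : X × X => f z.1 - f z.2 :=
      (hl.continuous.comp continuous_fst).sub (hl.continuous.comp continuous_snd)
    have : ∀ᶠ z : X × X in nhds (x, y), t < f z.1 - f z.2 :=
      (isOpen_lt continuous_const hc).eventually_mem (by simpa using hts)
    filter_upwards [this] with z hz
    exact hz.trans_le (le_dL z.1 z.2 hm hl)
  · constructor
    · intro hLo x y h0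
      rw [hLo]
      intro f hm hl
      have := le_dL x y hm hl
      rw [h0] at this
      linarith
    · intro h x y
      constructor
      · intro hxy f hm _; exact hm hxy
      · intro hf
        apply h
        refine le_antisymm (dL_le fun f hm hl => by linarith [hf f hm hl]) (dL_nonneg x y)
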